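/- arXiv:2005.07166 — 3 statements merged into one kernel-verified Lean document; each statement's English description precedes it below -/
import Mathlib

section
/- Conic combination property (Lemma 2.3): for any λ₁ > 0, λ₀ ≥ 0, U₁ ∈ G, and U₀ ∈ Ḡ, the state λ₁U₁ + λ₀U₀ belongs to G. -/
open scoped RealInnerProductSpace

/-- A state `U = (ρ, m, E)` in `ℝ × ℝ^d × ℝ`. -/
abbrev EulerState (d : ℕ) : Type := ℝ × EuclideanSpace ℝ (Fin d) × ℝ

/-- `𝒢(ρ, m, E) = E − ‖m‖²/(2ρ)`. -/
noncomputable def calG {d : ℕ} (U : EulerState d) : ℝ :=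
  U.2.2 - ‖U.2.1‖ ^ 2 / (2 * U.1)

/-- The admissible set `G = {(ρ, m, E) : ρ > 0, E − ‖m‖²/(2ρ) > 0}`. -/
noncomputable def admG (d : ℕ) : Set (EulerState d) :=
  {U | 0 < U.1 ∧ 0 < calG U}

private lemma aux_amgm (x y p : ℝ) (hx : 0 ≤ x) (hy : 0 ≤ y) (hp : 0 ≤ p)
    (h : p ^ 2 ≤ x * y) : 2 * p ≤ x + y := by
  nlinarith [sq_nonneg (x - y), sq_nonneg (x + y)]

/-- Closure of admG is contained in the closed set described below. -/
private lemma closure_admG_subset {d : ℕ} :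
    closure (admG d) ⊆
      {U : EulerState d | 0 ≤ U.1 ∧ 0 ≤ U.2.2 ∧ ‖U.2.1‖ ^ 2 ≤ 2 * U.1 * U.2.2} := by
  apply closure_minimal
  · rintro ⟨ρ, m, E⟩ ⟨hρ, hG⟩
    simp only [calG] at hG
    have h2ρ : 0 < 2 * ρ := by linarith
    have hlt : ‖m‖ ^ 2 / (2 * ρ) < E := by linarith
    have hlt' : ‖m‖ ^ 2 < E * (2 * ρ) := (div_lt_iff₀ h2ρ).mp hlt
    refine ⟨le_of_lt hρ, ?_, by nlinarith⟩
    have : 0 ≤ ‖m‖ ^ 2 / (2 * ρ) := by positivity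
    linarith
  · have c1 : Continuous fun U : EulerState d => U.1 := continuous_fst
    have c2 : Continuous fun U : EulerState d => U.2.1 := continuous_snd.fst
    have c3 : Continuous fun U : EulerState d => U.2.2 := continuous_snd.snd
    refine IsClosed.inter (isClosed_le continuous_const c1) ?_
    refine IsClosed.inter (isClosed_le continuous_const c3) ?_
    exact isClosed_le (c2.norm.pow 2) ((continuous_const.mul c1).mul c3)

/-- Lemma 2.3: for `λ₁ > 0`, `λ₀ ≥ 0`, `U₁ ∈ G`, `U₀ ∈ Ḡ`,
the state `λ₁U₁ + λ₀U₀` belongs to `G`. -/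
theorem admG_conic {d : ℕ} (hd : 1 ≤ d) (lam₁ lam₀ : ℝ)
    (hlam₁ : 0 < lam₁) (hlam₀ : 0 ≤ lam₀)
    (U₁ : EulerState d) (hU₁ : U₁ ∈ admG d)
    (U₀ : EulerState d) (hU₀ : U₀ ∈ closure (admG d)) :
    lam₁ • U₁ + lam₀ • U₀ ∈ admG d := by
  obtain ⟨ρ₁, m₁, E₁⟩ := U₁
  obtain ⟨ρ₀, m₀, E₀⟩ := U₀
  obtain ⟨hρ₁, hG₁⟩ := hU₁
  obtain ⟨hρ₀, hE₀, hm₀⟩ := closure_admG_subset hU₀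
  simp only at hρ₁ hG₁ hρ₀ hE₀ hm₀
  simp only [calG] at hG₁
  have h2ρ₁ : 0 < 2 * ρ₁ := by linarith
  have hm₁ : ‖m₁‖ ^ 2 < 2 * ρ₁ * E₁ := by
    have : ‖m₁‖ ^ 2 / (2 * ρ₁) < E₁ := by linarith
    nlinarith [(div_lt_iff₀ h2ρ₁).mp this]
  have hE₁ : 0 < E₁ := by nlinarith [sq_nonneg ‖m₁‖]
  have hρ : 0 < lam₁ * ρ₁ + lam₀ * ρ₀ := by nlinarith
  refine ⟨?_, ?_⟩
  · simpa using hρ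
  · have hnorm : ‖lam₁ • m₁ + lam₀ • m₀‖ ≤ lam₁ * ‖m₁‖ + lam₀ * ‖m₀‖ := by
      calc ‖lam₁ • m₁ + lam₀ • m₀‖ ≤ ‖lam₁ • m₁‖ + ‖lam₀ • m₀‖ := norm_add_le _ _
        _ = lam₁ * ‖m₁‖ + lam₀ * ‖m₀‖ := by
            rw [norm_smul, norm_smul, Real.norm_eq_abs, Real.norm_eq_abs,
              abs_of_pos hlam₁, abs_of_nonneg hlam₀]
    have hcross : 2 * (‖m₁‖ * ‖m₀‖) ≤ 2 * ρ₁ * E₀ + 2 * ρ₀ * E₁ := by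
      apply aux_amgm _ _ _ (by positivity) (by positivity) (by positivity)
      have : (‖m₁‖ * ‖m₀‖) ^ 2 ≤ (2 * ρ₁ * E₁) * (2 * ρ₀ * E₀) := by
        nlinarith [sq_nonneg ‖m₁‖, sq_nonneg ‖m₀‖, norm_nonneg m₁, norm_nonneg m₀]
      nlinarith
    have hsq : ‖lam₁ • m₁ + lam₀ • m₀‖ ^ 2 ≤ (lam₁ * ‖m₁‖ + lam₀ * ‖m₀‖) ^ 2 := by
      apply sq_le_sq' _ hnorm
      have := norm_nonneg (lam₁ • m₁ + lam₀ • m₀)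
      nlinarith [norm_nonneg m₁, norm_nonneg m₀]
    have key : ‖lam₁ • m₁ + lam₀ • m₀‖ ^ 2 <
        (lam₁ * E₁ + lam₀ * E₀) * (2 * (lam₁ * ρ₁ + lam₀ * ρ₀)) := by
      have t1 : lam₁ ^ 2 * ‖m₁‖ ^ 2 < lam₁ ^ 2 * (2 * ρ₁ * E₁) :=
        mul_lt_mul_of_pos_left hm₁ (by positivity)
      have t2 : lam₀ ^ 2 * ‖m₀‖ ^ 2 ≤ lam₀ ^ 2 * (2 * ρ₀ * E₀) :=
        mul_le_mul_of_nonneg_left hm₀ (by positivity)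
      have t3 : (lam₁ * lam₀) * (2 * (‖m₁‖ * ‖m₀‖)) ≤
          (lam₁ * lam₀) * (2 * ρ₁ * E₀ + 2 * ρ₀ * E₁) :=
        mul_le_mul_of_nonneg_left hcross (by positivity)
      nlinarith [hsq]
    show 0 < calG _
    simp only [calG, Prod.fst_add, Prod.snd_add, Prod.smul_fst, Prod.smul_snd,
      smul_eq_mul]
    rw [sub_pos, div_lt_iff₀ (by linarith)]
    linarith [key]
end

section
/- Source-control lemma (Lemma 2.4): for any λ ≥ 0, δ ∈ ℝ, U = (ρ, m, E) ∈ G, and a ∈ ℝ^d, if |δ|·‖a‖/√(2e) ≤ λ, where e = (E − ‖m‖²/(2ρ))/ρ is the specific internal energy of U, then the state λU + δ·(0, ρa, m·a) belongs to Ḡ. -/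
open scoped RealInnerProductSpace

/-- The specific internal energy `e = (E − ‖m‖²/(2ρ))/ρ`. -/
noncomputable def specIntEnergy {d : ℕ} (U : EulerState d) : ℝ := calG U / U.1

lemma mem_closure_admG_of_nonneg {d : ℕ} (V : EulerState d) (h1 : 0 ≤ V.1)
    (h2 : 0 ≤ V.2.2) (h3 : ‖V.2.1‖ ^ 2 ≤ 2 * V.1 * V.2.2) :
    V ∈ closure (admG d) := by
  have htend : Filter.Tendsto (fun ε : ℝ => ((V.1 + ε, V.2.1, V.2.2 + ε) : EulerState d))
      (nhdsWithin 0 (Set.Ioi 0)) (nhds V) := by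
    have hc : Filter.Tendsto (fun ε : ℝ => ((V.1 + ε, V.2.1, V.2.2 + ε) : EulerState d))
        (nhds 0) (nhds V) := by
      have : Continuous (fun ε : ℝ => ((V.1 + ε, V.2.1, V.2.2 + ε) : EulerState d)) := by
        fun_prop
      have := this.tendsto 0
      simpa using this
    exact hc.mono_left nhdsWithin_le_nhds
  refine mem_closure_of_tendsto htend ?_
  filter_upwards [self_mem_nhdsWithin] with ε hε
  have hε' : (0:ℝ) < ε := hε
  constructor
  · simpa using by linarith
  · show 0 < calG _
    unfold calG
    simp only
    rw [sub_pos, div_lt_iff₀ (by positivity)]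
    nlinarith [norm_nonneg V.2.1]

/-- Lemma 2.4: if `|δ|·‖a‖/√(2e) ≤ λ` then
`λU + δ(0, ρa, m·a) ∈ Ḡ`. -/
theorem admG_source_control {d : ℕ} (hd : 1 ≤ d) (lam δ : ℝ) (hlam : 0 ≤ lam)
    (U : EulerState d) (hU : U ∈ admG d) (a : EuclideanSpace ℝ (Fin d))
    (hcond : |δ| * ‖a‖ / Real.sqrt (2 * specIntEnergy U) ≤ lam) :
    lam • U + δ • ((0 : ℝ), U.1 • a, ⟪U.2.1, a⟫) ∈ closure (admG d) := by
  obtain ⟨hρ, hG⟩ := hU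
  set ρ := U.1
  set m := U.2.1
  set E := U.2.2
  have hGdef : calG U = E - ‖m‖ ^ 2 / (2 * ρ) := rfl
  have he : 0 < specIntEnergy U := div_pos hG hρ
  have hsq : 0 < Real.sqrt (2 * specIntEnergy U) := Real.sqrt_pos.mpr (by linarith)
  have hkey : |δ| * ‖a‖ ≤ lam * Real.sqrt (2 * specIntEnergy U) := by
    rw [div_le_iff₀ hsq] at hcond; exact hcond
  have hkey2 : δ ^ 2 * ‖a‖ ^ 2 ≤ lam ^ 2 * (2 * specIntEnergy U) := by
    have := mul_self_le_mul_self (by positivity) hkey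
    have hs : Real.sqrt (2 * specIntEnergy U) * Real.sqrt (2 * specIntEnergy U)
        = 2 * specIntEnergy U := Real.mul_self_sqrt (by linarith)
    calc δ ^ 2 * ‖a‖ ^ 2 = (|δ| * ‖a‖) * (|δ| * ‖a‖) := by
          rw [← sq_abs]; ring
      _ ≤ (lam * Real.sqrt (2 * specIntEnergy U)) * (lam * Real.sqrt (2 * specIntEnergy U)) := this
      _ = lam ^ 2 * (2 * specIntEnergy U) := by rw [show (lam * Real.sqrt (2 * specIntEnergy U)) * (lam * Real.sqrt (2 * specIntEnergy U)) = lam ^ 2 * (Real.sqrt (2 * specIntEnergy U) * Real.sqrt (2 * specIntEnergy U)) by ring, hs]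
  -- components of V
  have hV1 : (lam • U + δ • ((0 : ℝ), ρ • a, ⟪m, a⟫)).1 = lam * ρ := by
    simp [Prod.fst_add, Prod.smul_fst, smul_eq_mul]
    exact Or.inl rfl
  have hV21 : (lam • U + δ • ((0 : ℝ), ρ • a, ⟪m, a⟫)).2.1 = lam • m + (δ * ρ) • a := by
    simp [smul_smul]
    rfl
  have hV22 : (lam • U + δ • ((0 : ℝ), ρ • a, ⟪m, a⟫)).2.2 = lam * E + δ * ⟪m, a⟫ := by
    simp [smul_eq_mul]
    exact Or.inl rfl
  -- specific internal energy identity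
  have hespec : specIntEnergy U * ρ = calG U := by
    rw [specIntEnergy]; exact div_mul_cancel₀ _ hρ.ne'
  have hGval : 2 * ρ * E - ‖m‖ ^ 2 = 2 * ρ * calG U := by
    rw [hGdef]; field_simp
  have h3 : ‖(lam • U + δ • ((0 : ℝ), ρ • a, ⟪m, a⟫)).2.1‖ ^ 2 ≤
      2 * (lam • U + δ • ((0 : ℝ), ρ • a, ⟪m, a⟫)).1 *
        (lam • U + δ • ((0 : ℝ), ρ • a, ⟪m, a⟫)).2.2 := by
    rw [hV1, hV21, hV22]
    rw [norm_add_sq_real, real_inner_smul_left, real_inner_smul_right, norm_smul, norm_smul]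
    simp only [Real.norm_eq_abs, mul_pow, sq_abs]
    -- need: lam²‖m‖² + 2 lam δ ρ ⟪m,a⟫ + δ²ρ²‖a‖² ≤ 2 lam ρ (lam E + δ ⟪m,a⟫)
    have hkey3 : δ ^ 2 * ρ ^ 2 * ‖a‖ ^ 2 ≤ lam ^ 2 * (2 * ρ * E - ‖m‖ ^ 2) := by
      have : δ ^ 2 * ‖a‖ ^ 2 * ρ ^ 2 ≤ lam ^ 2 * (2 * specIntEnergy U) * ρ ^ 2 :=
        mul_le_mul_of_nonneg_right hkey2 (by positivity)
      calc δ ^ 2 * ρ ^ 2 * ‖a‖ ^ 2 = δ ^ 2 * ‖a‖ ^ 2 * ρ ^ 2 := by ring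
        _ ≤ lam ^ 2 * (2 * specIntEnergy U) * ρ ^ 2 := this
        _ = lam ^ 2 * (2 * ρ * (specIntEnergy U * ρ)) := by ring
        _ = lam ^ 2 * (2 * ρ * calG U) := by rw [hespec]
        _ = lam ^ 2 * (2 * ρ * E - ‖m‖ ^ 2) := by rw [hGval]
    nlinarith [sq_nonneg lam]
  apply mem_closure_admG_of_nonneg
  · rw [hV1]; positivity
  · rw [hV22]
    rcases eq_or_lt_of_le hlam with h0 | hpos
    · have ha0 : |δ| * ‖a‖ = 0 := le_antisymm (by rw [← h0] at hkey; simpa using hkey)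
        (by positivity)
    -- δ * ⟪m,a⟫ = 0
      have : |δ * ⟪m, a⟫| ≤ |δ| * ‖a‖ * ‖m‖ := by
        rw [abs_mul]
        have := abs_real_inner_le_norm m a
        nlinarith [abs_nonneg δ, norm_nonneg m, norm_nonneg a]
      rw [ha0] at this
      simp only [zero_mul] at this
      have h2 : δ * ⟪m, a⟫ = 0 := abs_nonpos_iff.mp this
      rw [← h0, h2]; simp
    · have hV1pos : (0:ℝ) < lam * ρ := by positivity
      rw [hV1, hV22] at h3
      nlinarith [sq_nonneg ‖lam • m + (δ * ρ) • a‖]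
  · exact h3
end

section
/- Lax–Friedrichs-type flux positivity (Lemma 2.5): for any U ∈ G, any unit vector n ∈ ℝ^d, and any λ ∈ ℝ satisfying |λ|·α_n(U) ≤ 1, the state U − λ F(U)·n belongs to G. -/
open scoped RealInnerProductSpace

/-- The pressure `p = (γ−1)(E − ‖m‖²/(2ρ))`. -/
noncomputable def press {d : ℕ} (γ : ℝ) (U : EulerState d) : ℝ := (γ - 1) * calG U

/-- The directional Euler flux
`F(U)·n = (m·n, (m·n/ρ) m + p n, (E+p)(m·n)/ρ)`. -/
noncomputable def eulerFluxDir {d : ℕ} (γ : ℝ) (U : EulerState d)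
    (n : EuclideanSpace ℝ (Fin d)) : EulerState d :=
  (⟪U.2.1, n⟫, (⟪U.2.1, n⟫ / U.1) • U.2.1 + press γ U • n,
    (U.2.2 + press γ U) * ⟪U.2.1, n⟫ / U.1)

/-- `α_n(U) = |u·n| + √(γp/ρ)`, where `u = m/ρ`. -/
noncomputable def alphaDir {d : ℕ} (γ : ℝ) (U : EulerState d)
    (n : EuclideanSpace ℝ (Fin d)) : ℝ :=
  |⟪U.2.1, n⟫ / U.1| + Real.sqrt (γ * press γ U / U.1)

set_option maxHeartbeats 1600000 in
/-- Lemma 2.5: for `U ∈ G`, a unit vector `n`, and any `λ` with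
`|λ|·α_n(U) ≤ 1`, the state `U − λ F(U)·n` belongs to `G`. -/
theorem LF_flux_positivity {d : ℕ} (hd : 1 ≤ d) (γ : ℝ) (hγ : 1 < γ)
    (U : EulerState d) (hU : U ∈ admG d) (n : EuclideanSpace ℝ (Fin d))
    (hn : ‖n‖ = 1) (lam : ℝ) (hlam : |lam| * alphaDir γ U n ≤ 1) :
    U - lam • eulerFluxDir γ U n ∈ admG d := by
  obtain ⟨hr, hG⟩ := hU
  by_cases hl0 : lam = 0
  · subst hl0
    simp only [zero_smul, sub_zero]
    exact ⟨hr, hG⟩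
  set r := U.1 with hrdef
  set m := U.2.1 with hmdef
  set E := U.2.2 with hEdef
  set b : ℝ := ⟪m, n⟫ with hbdef
  set G : ℝ := calG U with hGdef
  set p : ℝ := press γ U with hpdef
  have hGE : G = E - ‖m‖ ^ 2 / (2 * r) := rfl
  have hpG : p = (γ - 1) * G := rfl
  have halpha : alphaDir γ U n = |b / r| + Real.sqrt (γ * p / r) := rfl
  have h1 : (U - lam • eulerFluxDir γ U n).1 = r - lam * b := rfl
  have h2 : (U - lam • eulerFluxDir γ U n).2.1
      = m - lam • ((b / r) • m + p • n) := rfl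
  have h3 : (U - lam • eulerFluxDir γ U n).2.2
      = E - lam * ((E + p) * b / r) := rfl
  clear_value r m E b G p
  have hp : 0 < p := by
    rw [hpG]; exact mul_pos (by linarith) hG
  set c : ℝ := Real.sqrt (γ * p / r) with hcdef
  have hc : 0 < c := Real.sqrt_pos.mpr (by positivity)
  have hc2 : c ^ 2 = γ * p / r := Real.sq_sqrt (by positivity)
  clear_value c
  have hla : 0 < |lam| := abs_pos.mpr hl0
  have hcon : |lam| * |b / r| + |lam| * c ≤ 1 := by
    rw [halpha] at hlam; linarith [hlam, mul_add |lam| |b / r| c]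
  set A : ℝ := 1 - lam * b / r with hAdef
  clear_value A
  have hAge : |lam| * c ≤ A := by
    have hle : lam * b / r ≤ |lam * b / r| := le_abs_self _
    have heq : |lam * b / r| = |lam| * |b / r| := by
      rw [mul_div_assoc, abs_mul]
    rw [hAdef]
    linarith [hle, heq]
  have hA0 : 0 < A := lt_of_lt_of_le (mul_pos hla hc) hAge
  have hrne : r ≠ 0 := ne_of_gt hr
  have hrA : r - lam * b = r * A := by
    rw [hAdef]; field_simp
  have hρ' : 0 < r - lam * b := by rw [hrA]; exact mul_pos hr hA0
  have hl2 : 0 < lam ^ 2 := by positivity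
  -- key inequality
  have hkey : lam ^ 2 * p ^ 2 < 2 * G * r * A ^ 2 := by
    have e1 : (|lam| * c) ^ 2 ≤ A ^ 2 :=
      pow_le_pow_left₀ (mul_nonneg (abs_nonneg lam) hc.le) hAge 2
    have e1' : lam ^ 2 * c ^ 2 ≤ A ^ 2 := by rwa [mul_pow, sq_abs] at e1
    have e2 : 2 * G * (r * (lam ^ 2 * c ^ 2)) ≤ 2 * G * (r * A ^ 2) :=
      mul_le_mul_of_nonneg_left (mul_le_mul_of_nonneg_left e1' hr.le) (by linarith)
    have hc2' : r * c ^ 2 = γ * p := by rw [hc2]; field_simp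
    have e3 : r * (lam ^ 2 * c ^ 2) = lam ^ 2 * (γ * p) := by
      calc r * (lam ^ 2 * c ^ 2) = lam ^ 2 * (r * c ^ 2) := by ring
        _ = lam ^ 2 * (γ * p) := by rw [hc2']
    rw [e3] at e2
    have e4 : lam ^ 2 * p ^ 2 < 2 * G * (lam ^ 2 * (γ * p)) := by
      have hgp : 0 < lam ^ 2 * p * G := mul_pos (mul_pos hl2 hp) hG
      nlinarith [hgp, hpG]
    calc lam ^ 2 * p ^ 2 < 2 * G * (lam ^ 2 * (γ * p)) := e4
      _ ≤ 2 * G * (r * A ^ 2) := e2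
      _ = 2 * G * r * A ^ 2 := by ring
  -- norm of new momentum
  have hm' : m - lam • ((b / r) • m + p • n) = A • m + (-(lam * p)) • n := by
    rw [hAdef]
    have hb' : (b / r) • m = (b / r) • m := rfl
    module
  have hnormsq : ‖m - lam • ((b / r) • m + p • n)‖ ^ 2
      = A ^ 2 * ‖m‖ ^ 2 + 2 * A * (-(lam * p)) * b + (lam * p) ^ 2 := by
    rw [hm', norm_add_sq_real, norm_smul, norm_smul, real_inner_smul_left,
      real_inner_smul_right, hn, Real.norm_eq_abs, Real.norm_eq_abs,
      mul_pow, mul_pow, sq_abs, sq_abs, ← hbdef]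
    ring
  constructor
  · show 0 < (U - lam • eulerFluxDir γ U n).1
    rw [h1]; exact hρ'
  · show 0 < calG (U - lam • eulerFluxDir γ U n)
    have hcalG : calG (U - lam • eulerFluxDir γ U n)
        = (E - lam * ((E + p) * b / r))
          - ‖m - lam • ((b / r) • m + p • n)‖ ^ 2 / (2 * (r - lam * b)) := by
      rw [calG, h1, h2, h3]
    rw [hcalG, hnormsq]
    have hnum : 2 * (r - lam * b) * (E - lam * ((E + p) * b / r))
        - (A ^ 2 * ‖m‖ ^ 2 + 2 * A * (-(lam * p)) * b + (lam * p) ^ 2)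
        = 2 * G * r * A ^ 2 - lam ^ 2 * p ^ 2 := by
      have hEeq : E = G + ‖m‖ ^ 2 / (2 * r) := by rw [hGE]; ring
      rw [hEeq, hAdef]
      field_simp
      ring
    have h2ρ : 0 < 2 * (r - lam * b) := by linarith
    rw [sub_pos, div_lt_iff₀ h2ρ]
    have hsq : (lam * p) ^ 2 = lam ^ 2 * p ^ 2 := by ring
    linarith [hnum, hkey]
end
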